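/- There exists a constant C > 0 such that for all integers q ≥ 2 and k ≥ 1 with q² ≤ k, at least one of the following holds: (a) there exists an integer c with 0 ≤ c < q such that S^{q}_{k}(c,c) ≥ (1/(2q)) · ∑_{m=k³}^{(k+1)³} μ(m)² − C·q; or (b) there exists an integer d with 0 ≤ d < q−1 such that −S^{q−1}_{k}(d+1,d) ≥ (1/(2(q−1))) · ∑_{m=k³}^{(k+1)³} μ(m)² − C·q. -/

import Mathlib

/-- The Liouville function `λ(n) = (−1)^{Ω(n)}`. -/
def liouville (n : ℕ) : ℤ := (-1) ^ (ArithmeticFunction.cardFactors n)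

/-- `L_{k,q} := ⌊((k+1)³ − k³)/q⌋ − 1`. -/
def Lkq (k q : ℕ) : ℕ := ((k + 1) ^ 3 - k ^ 3) / q - 1

/-- `S^q_k(r,c) := ∑_{b=r}^{q−1+r} ∑_{j=0}^{L_{k,q}} λ(qj+c+k³)·μ(qj+b+k³)`. -/
def Sqk (q k r c : ℕ) : ℤ :=
  ∑ b ∈ Finset.Icc r (q - 1 + r), ∑ j ∈ Finset.range (Lkq k q + 1),
    liouville (q * j + c + k ^ 3) * ArithmeticFunction.moebius (q * j + b + k ^ 3)

open Finset

lemma liouville_mul_moebius (n : ℕ) :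
    liouville n * (ArithmeticFunction.moebius n : ℤ) = (ArithmeticFunction.moebius n : ℤ) ^ 2 := by
  by_cases h : Squarefree n
  · rw [liouville, ← ArithmeticFunction.moebius_apply_of_squarefree h, sq]
  · simp [ArithmeticFunction.moebius_eq_zero_of_not_squarefree h]

lemma abs_liouville (n : ℕ) : |liouville n| = 1 := by
  simp [liouville, abs_pow]

lemma abs_moebius_le_one (n : ℕ) : |(ArithmeticFunction.moebius n : ℤ)| ≤ 1 := by
  rw [ArithmeticFunction.abs_moebius]; split <;> norm_num

lemma term_abs_le (a b : ℕ) :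
    |liouville a * ArithmeticFunction.moebius b| ≤ 1 := by
  rw [abs_mul, abs_liouville, one_mul]; exact abs_moebius_le_one b

lemma moebius_sq_nonneg (n : ℕ) : (0:ℤ) ≤ (ArithmeticFunction.moebius n : ℤ) ^ 2 := sq_nonneg _

lemma moebius_sq_le_one (n : ℕ) : (ArithmeticFunction.moebius n : ℤ) ^ 2 ≤ 1 := by
  rw [ArithmeticFunction.moebius_sq]; split <;> norm_num

lemma sum_grid (q : ℕ) (g : ℕ → ℤ) (M : ℕ) :
    ∑ c ∈ Finset.range q, ∑ j ∈ Finset.range M, g (q * j + c)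
      = ∑ n ∈ Finset.range (q * M), g n := by
  induction M with
  | zero => simp
  | succ M ih =>
    rw [Nat.mul_succ, Finset.sum_range_add, ← ih]
    simp only [Finset.sum_range_succ]
    rw [Finset.sum_add_distrib]

lemma sum_range_sub_abs_le (h : ℕ → ℤ) (hb : ∀ n, |h n| ≤ 1) {M M' : ℕ} (hMM : M' ≤ M) :
    |∑ n ∈ Finset.range M, h n - ∑ n ∈ Finset.range M', h n| ≤ (M : ℤ) - M' := by
  obtain ⟨d, rfl⟩ := Nat.exists_eq_add_of_le hMM
  rw [Finset.sum_range_add, add_sub_cancel_left]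
  calc |∑ i ∈ range d, h (M' + i)| ≤ ∑ i ∈ range d, |h (M' + i)| :=
        Finset.abs_sum_le_sum_abs _ _
    _ ≤ ∑ _i ∈ range d, (1:ℤ) := Finset.sum_le_sum (fun i _ => hb _)
    _ = d := by simp
    _ ≤ (↑(M' + d) : ℤ) - ↑M' := by push_cast; ring_nf; exact le_refl _

lemma pigeon (f : ℕ → ℝ) (n : ℕ) (hn : 0 < n) (X : ℝ)
    (h : X ≤ ∑ c ∈ Finset.range n, f c) : ∃ c, c < n ∧ X / n ≤ f c := by
  by_contra hc
  push_neg at hc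
  have hlt : ∑ c ∈ Finset.range n, f c < ∑ _c ∈ Finset.range n, X / n :=
    Finset.sum_lt_sum_of_nonempty (Finset.nonempty_range_iff.mpr (by omega)) (fun i hi => hc i (Finset.mem_range.mp hi))
  rw [Finset.sum_const, Finset.card_range, nsmul_eq_mul] at hlt
  have hn' : (0:ℝ) < n := by exact_mod_cast hn
  rw [mul_div_cancel₀ _ (ne_of_gt hn')] at hlt
  linarith

lemma arith1 (x Q : ℝ) (hQ : 2 ≤ Q) : 1/(2*Q)*x - 2*Q ≤ (x/2 - Q^2/2)/Q := by
  have hQ0 : (0:ℝ) < Q := by linarith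
  rw [le_div_iff₀ hQ0]
  have e : (1/(2*Q)*x - 2*Q)*Q = x/2 - 2*Q^2 := by
    field_simp
  rw [e]
  nlinarith

lemma arith2 (x Q : ℝ) (hQ : 2 ≤ Q) : 1/(2*(Q-1))*x - 2*Q ≤ (x/2 - Q^2/2)/(Q-1) := by
  have hQ0 : (0:ℝ) < Q - 1 := by linarith
  rw [le_div_iff₀ hQ0]
  have e : (1/(2*(Q-1))*x - 2*Q)*(Q-1) = x/2 - 2*Q*(Q-1) := by
    field_simp
  rw [e]
  nlinarith

/-- for `q² ≤ k`, one of the two key correlation lower bounds holds. -/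
theorem stmt_12 :
    ∃ C : ℝ, 0 < C ∧ ∀ q k : ℕ, 2 ≤ q → 1 ≤ k → q ^ 2 ≤ k →
      (∃ c : ℕ, c < q ∧
        (1 / (2 * (q : ℝ))) *
            (∑ m ∈ Finset.Icc (k ^ 3) ((k + 1) ^ 3),
              (ArithmeticFunction.moebius m : ℝ) ^ 2) - C * q ≤ (Sqk q k c c : ℝ)) ∨
      (∃ d : ℕ, d < q - 1 ∧
        (1 / (2 * ((q : ℝ) - 1))) *
            (∑ m ∈ Finset.Icc (k ^ 3) ((k + 1) ^ 3),
              (ArithmeticFunction.moebius m : ℝ) ^ 2) - C * q ≤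
          -(Sqk (q - 1) k (d + 1) d : ℝ)) := by
  refine ⟨2, by norm_num, ?_⟩
  intro q k hq hk hqk
  have hcube : (k+1)^3 = k^3 + (3*k^2 + 3*k + 1) := by ring
  set N : ℕ := (k+1)^3 - k^3 with hN
  have hNval : N = 3*k^2+3*k+1 := by omega
  have hqk' : q ≤ k := le_trans (Nat.le_self_pow two_ne_zero q) hqk
  have hkN : k ≤ N := by nlinarith
  have hqN : q ≤ N := le_trans hqk' hkN
  set q' : ℕ := q - 1 with hq'
  have hq1 : q = q' + 1 := by omega
  have hq'0 : 0 < q' := by omega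
  have hq'N : q' ≤ N := by omega
  set M : ℕ := q * (N / q) with hM
  set M' : ℕ := q' * (N / q') with hM'
  have hdm : q * (N / q) + N % q = N := Nat.div_add_mod N q
  have hdm' : q' * (N / q') + N % q' = N := Nat.div_add_mod N q'
  have hMle : M ≤ N := by omega
  have hMgt : N < M + q := by
    have := Nat.mod_lt N (show 0 < q by omega); omega
  have hM'le : M' ≤ N := by omega
  have hM'gt : N < M' + q' := by
    have := Nat.mod_lt N hq'0; omega
  -- key reindexing
  have key : ∀ Q : ℕ, 0 < Q → Q ≤ N → ∀ t : ℕ,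
      (∑ c ∈ Finset.range Q, ∑ j ∈ Finset.range (Lkq k Q + 1),
        liouville (Q*j + c + k^3) * ArithmeticFunction.moebius (Q*j + (c+t) + k^3))
      = ∑ n ∈ Finset.range (Q * (N/Q)),
          liouville (n + k^3) * ArithmeticFunction.moebius (n + t + k^3) := by
    intro Q hQ0 hQN t
    have h1 : 1 ≤ N / Q := (Nat.one_le_div_iff hQ0).mpr hQN
    have hL : Lkq k Q + 1 = N / Q := by
      simp only [Lkq, ← hN]; omega
    rw [hL,
      ← sum_grid Q (fun n => liouville (n + k^3) * ArithmeticFunction.moebius (n + t + k^3)) (N/Q)]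
    refine Finset.sum_congr rfl (fun c _ => Finset.sum_congr rfl (fun j _ => ?_))
    have e : Q*j + (c+t) + k^3 = Q*j + c + t + k^3 := by ring
    rw [e]
  -- rewriting Sqk
  have hSqk : ∀ Q r c0 : ℕ, 1 ≤ Q → Sqk Q k r c0
      = ∑ t ∈ Finset.range Q, ∑ j ∈ Finset.range (Lkq k Q + 1),
          liouville (Q*j + c0 + k^3) * ArithmeticFunction.moebius (Q*j + (r+t) + k^3) := by
    intro Q r c0 hQ
    unfold Sqk
    have h1 : Finset.Icc r (Q-1+r) = Finset.Ico r (Q+r) := by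
      rw [← Finset.Ico_add_one_right_eq_Icc]; congr 1; omega
    rw [h1, Finset.sum_Ico_eq_sum_range]
    have h2 : Q + r - r = Q := by omega
    rw [h2]
  -- the two main sums
  set A : ℤ := ∑ c ∈ Finset.range q, Sqk q k c c with hA
  set B0 : ℤ := ∑ d ∈ Finset.range q', Sqk q' k (d+1) d with hB0
  set S : ℤ := ∑ m ∈ Finset.Icc (k^3) ((k+1)^3), (ArithmeticFunction.moebius m : ℤ)^2 with hS
  -- A as sum of G q t
  have hAeq : A = ∑ t ∈ Finset.range q, ∑ n ∈ Finset.range M,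
      liouville (n + k^3) * ArithmeticFunction.moebius (n + t + k^3) := by
    rw [hA]
    have : ∀ c ∈ Finset.range q, Sqk q k c c
        = ∑ t ∈ Finset.range q, ∑ j ∈ Finset.range (Lkq k q + 1),
            liouville (q*j + c + k^3) * ArithmeticFunction.moebius (q*j + (c+t) + k^3) :=
      fun c _ => hSqk q c c (by omega)
    rw [Finset.sum_congr rfl this, Finset.sum_comm]
    exact Finset.sum_congr rfl (fun t _ => key q (by omega) hqN t)
  have hB0eq : B0 = ∑ t ∈ Finset.range q', ∑ n ∈ Finset.range M',
      liouville (n + k^3) * ArithmeticFunction.moebius (n + (t+1) + k^3) := by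
    rw [hB0]
    have : ∀ d ∈ Finset.range q', Sqk q' k (d+1) d
        = ∑ t ∈ Finset.range q', ∑ j ∈ Finset.range (Lkq k q' + 1),
            liouville (q'*j + d + k^3) * ArithmeticFunction.moebius (q'*j + (d+(t+1)) + k^3) := by
      intro d _
      rw [hSqk q' (d+1) d (by omega)]
      refine Finset.sum_congr rfl (fun t _ => Finset.sum_congr rfl (fun j _ => ?_))
      have e : q'*j + (d+1+t) + k^3 = q'*j + (d+(t+1)) + k^3 := by ring
      rw [e]
    rw [Finset.sum_congr rfl this, Finset.sum_comm]
    exact Finset.sum_congr rfl (fun t _ => key q' hq'0 hq'N (t+1))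
  -- split off diagonal of A
  have hAsplit : A = (∑ n ∈ Finset.range M, (ArithmeticFunction.moebius (n + k^3) : ℤ)^2)
      + ∑ t ∈ Finset.range q', ∑ n ∈ Finset.range M,
          liouville (n + k^3) * ArithmeticFunction.moebius (n + (t+1) + k^3) := by
    rw [hAeq, hq1, Finset.sum_range_succ']
    rw [add_comm]
    congr 1
    refine Finset.sum_congr rfl (fun n _ => ?_)
    rw [Nat.add_zero, liouville_mul_moebius]
  -- diagonal lower bound : S - q ≤ diagonal
  have hdiag : S - q ≤ ∑ n ∈ Finset.range M, (ArithmeticFunction.moebius (n + k^3) : ℤ)^2 := by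
    have hSeq : S = ∑ i ∈ Finset.range (N+1), (ArithmeticFunction.moebius (k^3 + i) : ℤ)^2 := by
      rw [hS, ← Finset.Ico_add_one_right_eq_Icc, Finset.sum_Ico_eq_sum_range]
      have hNe : (k+1)^3 + 1 - k^3 = N + 1 := by omega
      rw [hNe]
    have hsplit : N + 1 = M + (N + 1 - M) := by omega
    rw [hSeq, hsplit, Finset.sum_range_add]
    have h1 : ∑ i ∈ Finset.range M, (ArithmeticFunction.moebius (k^3 + i) : ℤ)^2
        = ∑ n ∈ Finset.range M, (ArithmeticFunction.moebius (n + k^3) : ℤ)^2 := by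
      refine Finset.sum_congr rfl (fun n _ => ?_)
      rw [Nat.add_comm]
    have h2 : ∑ i ∈ Finset.range (N+1-M),
        (ArithmeticFunction.moebius (k^3 + (M + i)) : ℤ)^2 ≤ q := by
      calc ∑ i ∈ Finset.range (N+1-M), (ArithmeticFunction.moebius (k^3 + (M + i)) : ℤ)^2
          ≤ ∑ _i ∈ Finset.range (N+1-M), (1:ℤ) :=
            Finset.sum_le_sum (fun i _ => moebius_sq_le_one _)
        _ = (N+1-M : ℕ) := by simp
        _ ≤ q := by exact_mod_cast (by omega : N+1-M ≤ q)
    rw [h1]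
    omega
  -- off-diagonal bound
  have hoff : ∀ t : ℕ,
      |(∑ n ∈ Finset.range M, liouville (n + k^3) * ArithmeticFunction.moebius (n + (t+1) + k^3))
       - ∑ n ∈ Finset.range M', liouville (n + k^3) * ArithmeticFunction.moebius (n + (t+1) + k^3)|
      ≤ (q : ℤ) := by
    intro t
    set h : ℕ → ℤ := fun n => liouville (n + k^3) * ArithmeticFunction.moebius (n + (t+1) + k^3)
      with hh
    have hb : ∀ n, |h n| ≤ 1 := fun n => term_abs_le _ _
    rcases le_total M' M with hle | hle
    · calc |∑ n ∈ Finset.range M, h n - ∑ n ∈ Finset.range M', h n|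
          ≤ (M : ℤ) - M' := sum_range_sub_abs_le h hb hle
        _ ≤ q := by
            have : M < M' + q := by omega
            exact_mod_cast by omega
    · rw [abs_sub_comm]
      calc |∑ n ∈ Finset.range M', h n - ∑ n ∈ Finset.range M, h n|
          ≤ (M' : ℤ) - M := sum_range_sub_abs_le h hb hle
        _ ≤ q := by
            have : M' < M + q := by omega
            exact_mod_cast by omega
  -- combine: A - B0 ≥ S - q^2
  have hmain : S - q^2 ≤ A - B0 := by
    have hsum : A - B0 = (∑ n ∈ Finset.range M, (ArithmeticFunction.moebius (n + k^3) : ℤ)^2)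
        + ∑ t ∈ Finset.range q',
            ((∑ n ∈ Finset.range M,
                liouville (n + k^3) * ArithmeticFunction.moebius (n + (t+1) + k^3))
             - ∑ n ∈ Finset.range M',
                liouville (n + k^3) * ArithmeticFunction.moebius (n + (t+1) + k^3)) := by
      rw [hAsplit, hB0eq, Finset.sum_sub_distrib]
      ring
    rw [hsum]
    have hoffsum : -(q' * q : ℤ) ≤ ∑ t ∈ Finset.range q',
        ((∑ n ∈ Finset.range M,
            liouville (n + k^3) * ArithmeticFunction.moebius (n + (t+1) + k^3))
         - ∑ n ∈ Finset.range M',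
            liouville (n + k^3) * ArithmeticFunction.moebius (n + (t+1) + k^3)) := by
      have habs : |∑ t ∈ Finset.range q',
          ((∑ n ∈ Finset.range M,
              liouville (n + k^3) * ArithmeticFunction.moebius (n + (t+1) + k^3))
           - ∑ n ∈ Finset.range M',
              liouville (n + k^3) * ArithmeticFunction.moebius (n + (t+1) + k^3))|
          ≤ (q' : ℤ) * q := by
        calc _ ≤ ∑ t ∈ Finset.range q', |(∑ n ∈ Finset.range M,
              liouville (n + k^3) * ArithmeticFunction.moebius (n + (t+1) + k^3))
           - ∑ n ∈ Finset.range M',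
              liouville (n + k^3) * ArithmeticFunction.moebius (n + (t+1) + k^3)| :=
            Finset.abs_sum_le_sum_abs _ _
          _ ≤ ∑ _t ∈ Finset.range q', (q:ℤ) := Finset.sum_le_sum (fun t _ => hoff t)
          _ = (q' : ℤ) * q := by simp [mul_comm]
      have := neg_le_of_abs_le habs
      linarith
    have hq2 : (q:ℤ) + q' * q ≤ (q:ℤ)^2 := by
      have : (q':ℤ) = (q:ℤ) - 1 := by push_cast [hq1]; ring
      nlinarith [show (2:ℤ) ≤ (q:ℤ) by exact_mod_cast hq]
    linarith [hdiag, hoffsum]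
  -- pass to the reals
  set SR : ℝ := ∑ m ∈ Finset.Icc (k ^ 3) ((k + 1) ^ 3),
      (ArithmeticFunction.moebius m : ℝ) ^ 2 with hSR
  have hScast : (S : ℝ) = SR := by
    rw [hS, hSR]; push_cast; rfl
  have hqR : (2:ℝ) ≤ (q:ℝ) := by exact_mod_cast hq
  have hmainR : SR - (q:ℝ)^2 ≤ (A:ℝ) + (∑ d ∈ Finset.range q', -(Sqk q' k (d+1) d : ℝ)) := by
    have h1 : (∑ d ∈ Finset.range q', -(Sqk q' k (d+1) d : ℝ)) = -(B0 : ℝ) := by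
      rw [hB0]; push_cast; rw [← Finset.sum_neg_distrib]
    rw [h1, ← hScast]
    have := hmain
    have : ((S - q^2 : ℤ) : ℝ) ≤ ((A - B0 : ℤ) : ℝ) := by exact_mod_cast hmain
    push_cast at this
    linarith
  by_cases hcase : SR/2 - (q:ℝ)^2/2 ≤ (A:ℝ)
  · left
    have hAsum : (A:ℝ) = ∑ c ∈ Finset.range q, (Sqk q k c c : ℝ) := by
      rw [hA]; push_cast; rfl
    obtain ⟨c, hc, hfc⟩ := pigeon (fun c => (Sqk q k c c : ℝ)) q (by omega)
      (SR/2 - (q:ℝ)^2/2) (by rw [← hAsum]; exact hcase)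
    refine ⟨c, hc, ?_⟩
    exact le_trans (arith1 SR q hqR) hfc
  · right
    push_neg at hcase
    have hBsum : SR/2 - (q:ℝ)^2/2 ≤ ∑ d ∈ Finset.range q', -(Sqk q' k (d+1) d : ℝ) := by
      linarith
    obtain ⟨d, hd, hfd⟩ := pigeon (fun d => -(Sqk q' k (d+1) d : ℝ)) q' hq'0
      (SR/2 - (q:ℝ)^2/2) hBsum
    refine ⟨d, hd, ?_⟩
    have hq'cast : ((q' : ℕ) : ℝ) = (q:ℝ) - 1 := by
      rw [hq']; push_cast [Nat.cast_sub (by omega : 1 ≤ q)]; ring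
    rw [hq'cast] at hfd
    exact le_trans (arith2 SR q hqR) hfd
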